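/- arXiv:0802.3654 — 3 statements merged into one kernel-verified Lean document; each statement's English description precedes it below -/
import Mathlib

section
/- Let d ≥ 1. There is a constant c depending only on d such that for every N ≥ 2 and every function g : T_N → ℝ vanishing outside S (the image in T_N of the interior boundary of the box {0,…,N−1}^d), there exists a flow J on the edges of T_N with div J(x) + g(x) = ν(g) for every x ∈ T_N, and |J|_∞ ≤ c |g|_∞. -/
open Filter Topology

noncomputable section

/-- The lattice `ℤ^d`. -/
abbrev Zlat (d : ℕ) : Type := Fin d → ℤ

/-- The discrete torus `(ℤ/Nℤ)^d`. -/
abbrev Torus (d N : ℕ) : Type := Fin d → ZMod N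

/-- The canonical projection `π : ℤ^d → (ℤ/Nℤ)^d`. -/
def latProj (d N : ℕ) (z : Zlat d) : Torus d N := fun i => (z i : ZMod N)

/-- Adjacency on `ℤ^d`: `x ~ x'` iff `|x - x'|_1 = 1`. -/
def latAdj {d : ℕ} (x x' : Zlat d) : Prop := (∑ i, (x i - x' i).natAbs) = 1

instance {d : ℕ} (x x' : Zlat d) : Decidable (latAdj x x') := by
  unfold latAdj; infer_instance

/-- Adjacency on the torus: `x ~ x'` iff the quotient `l^1`-distance equals `1`. -/
def torusAdj {d N : ℕ} (x x' : Torus d N) : Prop :=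
  (∑ i, min ((x i - x' i).val) (N - (x i - x' i).val)) = 1

instance {d N : ℕ} (x x' : Torus d N) : Decidable (torusAdj x x') := by
  unfold torusAdj; infer_instance

/-- The `l^∞`-distance on the torus. -/
def torusDistInf {d N : ℕ} (x y : Torus d N) : ℕ :=
  Finset.univ.sup fun i => min ((x i - y i).val) (N - (x i - y i).val)

/-- The `l^∞`-distance on `ℤ^d`. -/
def latDistInf {d : ℕ} (x y : Zlat d) : ℕ :=
  Finset.univ.sup fun i => (x i - y i).natAbs

/-- Dirichlet form on `ℤ^d`. -/
def latDirichlet (d : ℕ) (f : Zlat d → ℝ) : ℝ :=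
  (1 / (4 * (d : ℝ))) * ∑' p : Zlat d × Zlat d,
    if latAdj p.1 p.2 then (f p.1 - f p.2) ^ 2 else 0

/-- Capacity of a set `A ⊆ ℤ^d`, defined through the Dirichlet principle. -/
def capacity (d : ℕ) (A : Set (Zlat d)) : ℝ :=
  sInf { E | ∃ f : Zlat d → ℝ, (Function.support f).Finite ∧
    (∀ x ∈ A, f x = 1) ∧ E = latDirichlet d f }

/-- Dirichlet form on the torus. -/
def torusDirichlet (d N : ℕ) (f : Torus d N → ℝ) : ℝ :=
  (1 / (4 * (d : ℝ))) * ∑' p : Torus d N × Torus d N,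
    if torusAdj p.1 p.2 then (f p.1 - f p.2) ^ 2 else 0

/-- A flow on the edges of a graph: antisymmetric on edges, zero off edges. -/
def IsFlow {α : Type*} (adj : α → α → Prop) (I : α → α → ℝ) : Prop :=
  ∀ x x', (adj x x' → I x x' = - I x' x) ∧ (¬ adj x x' → I x x' = 0)

/-- Divergence of a flow on `ℤ^d`: the net flow out of `x`. -/
def latDiv (d : ℕ) (I : Zlat d → Zlat d → ℝ) (x : Zlat d) : ℝ :=
  ∑' x', if latAdj x x' then I x x' else 0

/-- Energy dissipated by a flow on `ℤ^d`. -/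
def latEnergy (d : ℕ) (I : Zlat d → Zlat d → ℝ) : ℝ :=
  (d : ℝ) * ∑' p : Zlat d × Zlat d, (I p.1 p.2) ^ 2

/-- Divergence of a flow on the torus. -/
def torusDiv {d N : ℕ} (I : Torus d N → Torus d N → ℝ) (x : Torus d N) : ℝ :=
  ∑' x', if torusAdj x x' then I x x' else 0

/-- Energy dissipated by a flow on the torus. -/
def torusEnergy (d N : ℕ) (I : Torus d N → Torus d N → ℝ) : ℝ :=
  (d : ℝ) * ∑' p : Torus d N × Torus d N, (I p.1 p.2) ^ 2

/-- Sup-norm of a function on the torus. -/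
def torusSupNorm {d N : ℕ} (f : Torus d N → ℝ) : ℝ := ⨆ x, |f x|

/-- Sup-norm of a flow on the torus. -/
def torusFlowSup {d N : ℕ} (I : Torus d N → Torus d N → ℝ) : ℝ :=
  ⨆ p : Torus d N × Torus d N, |I p.1 p.2|

/-- Integral with respect to the uniform distribution `ν` on the torus. -/
def nu (d N : ℕ) (f : Torus d N → ℝ) : ℝ := (∑' x, f x) / (N : ℝ) ^ d

/-- The `2d` signed unit steps, as elements of the torus. -/
def torusStep (d N : ℕ) (p : Fin d × Bool) : Torus d N :=
  if p.2 then latProj d N (Pi.single p.1 1) else - latProj d N (Pi.single p.1 1)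

/-- The `2d` signed unit steps in `ℤ^d`. -/
def latStep (d : ℕ) (p : Fin d × Bool) : Zlat d :=
  if p.2 then Pi.single p.1 1 else - Pi.single p.1 1

/-- Position at time `m` of the walk started at `x0` with steps `ξ`. -/
def walkPos {d N : ℕ} {n : ℕ} (x0 : Torus d N) (ξ : Fin n → Fin d × Bool) (m : ℕ) :
    Torus d N :=
  x0 + ∑ k ∈ Finset.univ.filter (fun k : Fin n => (k : ℕ) < m), torusStep d N (ξ k)

open Classical in
/-- Probability that the simple random walk on the torus, started from the uniform
distribution, avoids `B` at all times `0, 1, …, n`. -/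
def avoidProb (d N : ℕ) (B : Set (Torus d N)) (n : ℕ) : ℝ :=
  ((N : ℝ) ^ d * (2 * (d : ℝ)) ^ n)⁻¹ *
    ∑' w : Torus d N × (Fin n → Fin d × Bool),
      if ∀ m ≤ n, walkPos w.1 w.2 m ∉ B then 1 else 0

/-- Expected entrance time `E[H_B]` of the uniform-start walk into `B`,
via `E[H_B] = ∑_{n ≥ 0} P[H_B > n]`. -/
def expHit (d N : ℕ) (B : Set (Torus d N)) : ℝ := ∑' n : ℕ, avoidProb d N B n

open Classical in
/-- `P_x^{ℤ^d}[H_A < ∞]`: probability that the walk on `ℤ^d` started at `x` ever visits `A`. -/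
def latHitProb (d : ℕ) (A : Set (Zlat d)) (x : Zlat d) : ℝ :=
  ⨆ n : ℕ, ((2 * (d : ℝ)) ^ n)⁻¹ *
    ((Finset.univ.filter (fun ξ : Fin n → Fin d × Bool =>
      ∃ m ≤ n,
        (x + ∑ k ∈ Finset.univ.filter (fun k : Fin n => (k : ℕ) < m), latStep d (ξ k)) ∈ A)).card : ℝ)

/-- The box `T'_N = {0, …, N-1}^d ⊆ ℤ^d`. -/
def boxSet (d N : ℕ) : Set (Zlat d) := {z | ∀ i, 0 ≤ z i ∧ z i ≤ (N : ℤ) - 1}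

/-- The interior boundary `∂_int T'_N` of the box. -/
def boxBdry (d N : ℕ) : Set (Zlat d) :=
  {z | z ∈ boxSet d N ∧ ∃ i, z i = 0 ∨ z i = (N : ℤ) - 1}

/-- `S`: the image in the torus of the interior boundary of the box. -/
def torusBdry (d N : ℕ) : Set (Torus d N) := latProj d N '' boxBdry d N

/-- The bijection `ψ` identifying the torus with the box `{0, …, N-1}^d`. -/
def psi (d N : ℕ) (x : Torus d N) : Zlat d := fun i => ((x i).val : ℤ)

namespace S7

variable {d N : ℕ}

lemma cast_pred (hN : 1 ≤ N) : ((N - 1 : ℕ) : ZMod N) = -1 := by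
  have h : ((N : ℕ) : ZMod N) = 0 := ZMod.natCast_self N
  push_cast [Nat.cast_sub hN]
  rw [h]; ring

lemma val_neg_one' (hN : 2 ≤ N) : (-1 : ZMod N).val = N - 1 := by
  rw [← cast_pred (by omega : 1 ≤ N), ZMod.val_natCast, Nat.mod_eq_of_lt (by omega)]

lemma val_one'' (hN : 2 ≤ N) : (1 : ZMod N).val = 1 := by
  haveI : Fact (1 < N) := ⟨by omega⟩
  exact ZMod.val_one N

lemma val_sub_one (hN : 2 ≤ N) (a : ZMod N) (ha : a.val ≠ 0) :
    (a - 1).val = a.val - 1 := by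
  haveI : NeZero N := ⟨by omega⟩
  have h1 : a = ((a.val : ℕ) : ZMod N) := (ZMod.natCast_zmod_val a).symm
  have h2 : a - 1 = ((a.val - 1 : ℕ) : ZMod N) := by
    rw [Nat.cast_sub (by omega)]
    rw [← h1]; push_cast; ring
  rw [h2, ZMod.val_natCast, Nat.mod_eq_of_lt]
  have := ZMod.val_lt a
  omega

variable [NeZero N]

lemma sum_zmod_eq_range (f : ZMod N → ℝ) :
    ∑ j : ZMod N, f j = ∑ j ∈ Finset.range N, f (j : ZMod N) := by
  refine Finset.sum_nbij' (i := fun (j : ZMod N) => j.val)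
    (j := fun (j : ℕ) => ((j : ℕ) : ZMod N)) ?_ ?_ ?_ ?_ ?_
  · intro a _; exact Finset.mem_range.2 (ZMod.val_lt a)
  · intro a _; exact Finset.mem_univ _
  · intro a _; exact ZMod.natCast_zmod_val a
  · intro a ha; exact ZMod.val_natCast_of_lt (Finset.mem_range.1 ha)
  · intro a _; simp [ZMod.natCast_zmod_val]

/-- Average of `h` over the line through `x` in direction `k`. -/
def tavg (k : Fin d) (h : Torus d N → ℝ) (x : Torus d N) : ℝ :=
  (∑ j : ZMod N, h (Function.update x k j)) / N

/-- 1-d flow field in direction `k` solving the line Poisson equation. -/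
def tF (k : Fin d) (h : Torus d N → ℝ) (x : Torus d N) : ℝ :=
  ∑ j ∈ Finset.range ((x k).val + 1), (tavg k h x - h (Function.update x k (j : ZMod N)))

lemma tavg_update (k : Fin d) (h : Torus d N → ℝ) (x : Torus d N) (c : ZMod N) :
    tavg k h (Function.update x k c) = tavg k h x := by
  simp [tavg, Function.update_idem]

lemma tF_grad (hN : 2 ≤ N) (k : Fin d) (h : Torus d N → ℝ) (x : Torus d N) :
    tF k h x - tF k h (Function.update x k (x k - 1)) = tavg k h x - h x := by
  have hupd : ∀ j : ZMod N,
      Function.update (Function.update x k (x k - 1)) k j = Function.update x k j := by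
    intro j; rw [Function.update_idem]
  have havg := tavg_update k h x (x k - 1)
  have hkey : (Function.update x k (x k - 1)) k = x k - 1 := Function.update_self k _ x
  by_cases h0 : (x k).val = 0
  · have hx0 : x k = 0 := (ZMod.val_eq_zero _).1 h0
    have hv : ((x k - 1).val) = N - 1 := by rw [hx0, zero_sub, val_neg_one' hN]
    have hF2 : tF k h (Function.update x k (x k - 1)) = 0 := by
      unfold tF
      rw [havg, hkey, hv]
      have hNN : N - 1 + 1 = N := by omega
      rw [hNN]
      simp only [hupd]
      rw [Finset.sum_sub_distrib, Finset.sum_const, Finset.card_range]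
      rw [← sum_zmod_eq_range (fun j => h (Function.update x k j))]
      unfold tavg
      have : (N : ℝ) ≠ 0 := by
        exact_mod_cast (by omega : N ≠ 0)
      rw [nsmul_eq_mul, mul_div_assoc', mul_div_cancel_left₀ _ this, sub_self]
    have hF1 : tF k h x = tavg k h x - h x := by
      unfold tF
      rw [h0, zero_add, Finset.range_one, Finset.sum_singleton, Nat.cast_zero, ← hx0,
        Function.update_eq_self]
    rw [hF1, hF2]; ring
  · have hv : ((x k - 1).val) = (x k).val - 1 := val_sub_one hN _ h0
    unfold tF
    rw [havg, hkey, hv]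
    simp only [hupd]
    have hm : (x k).val - 1 + 1 = (x k).val := by omega
    rw [hm]
    rw [Finset.sum_range_succ _ ((x k).val)]
    have hxx : (((x k).val : ℕ) : ZMod N) = x k := ZMod.natCast_zmod_val _
    rw [hxx, Function.update_eq_self]
    ring

lemma tF_bound (k : Fin d) (h : Torus d N → ℝ) (x : Torus d N) (A : ℝ)
    (hA : ∀ y : Torus d N, ∑ j : ZMod N, |h (Function.update y k j)| ≤ A) :
    |tF k h x| ≤ 2 * A := by
  have hNpos : (0:ℝ) < N := by
    have := Nat.pos_of_ne_zero (NeZero.ne N); exact_mod_cast this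
  have hA0 : 0 ≤ A := le_trans (Finset.sum_nonneg fun _ _ => abs_nonneg _) (hA x)
  have hline : |tavg k h x| * N ≤ A := by
    unfold tavg
    rw [abs_div, abs_of_nonneg hNpos.le, div_mul_cancel₀ _ hNpos.ne']
    exact (Finset.abs_sum_le_sum_abs _ _).trans (hA x)
  have hmN : (x k).val + 1 ≤ N := ZMod.val_lt (x k)
  calc |tF k h x| ≤ ∑ j ∈ Finset.range ((x k).val + 1),
        |tavg k h x - h (Function.update x k (j : ZMod N))| := Finset.abs_sum_le_sum_abs _ _
    _ ≤ ∑ j ∈ Finset.range ((x k).val + 1),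
        (|tavg k h x| + |h (Function.update x k (j : ZMod N))|) :=
          Finset.sum_le_sum (fun j _ => abs_sub _ _)
    _ = ((x k).val + 1 : ℕ) * |tavg k h x| +
        ∑ j ∈ Finset.range ((x k).val + 1), |h (Function.update x k (j : ZMod N))| := by
          rw [Finset.sum_add_distrib, Finset.sum_const, Finset.card_range, nsmul_eq_mul]
    _ ≤ A + A := by
        gcongr ?_ + ?_
        · calc ((x k).val + 1 : ℕ) * |tavg k h x| ≤ (N : ℝ) * |tavg k h x| := by
                have : (((x k).val + 1 : ℕ) : ℝ) ≤ (N : ℝ) := by exact_mod_cast hmN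
                exact mul_le_mul_of_nonneg_right this (abs_nonneg _)
            _ ≤ A := by rw [mul_comm]; exact hline
        · calc ∑ j ∈ Finset.range ((x k).val + 1), |h (Function.update x k (j : ZMod N))|
              ≤ ∑ j ∈ Finset.range N, |h (Function.update x k (j : ZMod N))| :=
                Finset.sum_le_sum_of_subset_of_nonneg
                  (Finset.range_subset_range.2 hmN) (fun _ _ _ => abs_nonneg _)
            _ = ∑ j : ZMod N, |h (Function.update x k j)| :=
                (sum_zmod_eq_range (fun j => |h (Function.update x k j)|)).symm
            _ ≤ A := hA x
    _ = 2 * A := by ring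

lemma tavg_abs_le (k : Fin d) (h : Torus d N → ℝ) (B : ℝ) (hb : ∀ y, |h y| ≤ B)
    (y : Torus d N) : |tavg k h y| ≤ B := by
  have hNpos : (0:ℝ) < N := by
    have := Nat.pos_of_ne_zero (NeZero.ne N); exact_mod_cast this
  unfold tavg
  rw [abs_div, abs_of_nonneg hNpos.le, div_le_iff₀ hNpos]
  calc |∑ j : ZMod N, h (Function.update y k j)| ≤
      ∑ j : ZMod N, |h (Function.update y k j)| := Finset.abs_sum_le_sum_abs _ _
    _ ≤ ∑ _j : ZMod N, B := Finset.sum_le_sum (fun j _ => hb _)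
    _ = B * N := by
        rw [Finset.sum_const, nsmul_eq_mul]
        have : (Fintype.card (ZMod N) : ℝ) = N := by rw [ZMod.card]
        simp [Finset.card_univ, this]; ring

lemma linesum_of_ptwise (k : Fin d) (h : Torus d N → ℝ) (B : ℝ) (hb : ∀ y, |h y| ≤ B)
    (y : Torus d N) : ∑ j : ZMod N, |h (Function.update y k j)| ≤ N * B := by
  calc ∑ j : ZMod N, |h (Function.update y k j)| ≤ ∑ _j : ZMod N, B :=
        Finset.sum_le_sum (fun j _ => hb _)
    _ = N * B := by
        rw [Finset.sum_const, nsmul_eq_mul]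
        congr 1
        rw [Finset.card_univ, ZMod.card]

end S7
namespace S7
variable {d N : ℕ} [NeZero N]

lemma adj_sum_single (hN : 2 ≤ N) (x : Torus d N) (k : Fin d) (c : ZMod N)
    (hc : ((x k - c).val = 1 ∧ N - (x k - c).val = N - 1) ∨
          ((x k - c).val = N - 1 ∧ N - (x k - c).val = 1)) :
    torusAdj x (Function.update x k c) := by
  unfold torusAdj
  rw [Finset.sum_eq_single k]
  · rw [Function.update_self]
    rcases hc with ⟨h1, h2⟩ | ⟨h1, h2⟩
    · rw [h1]; omega
    · rw [h1]; omega
  · intro i _ hik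
    rw [Function.update_of_ne hik, sub_self, ZMod.val_zero]
    simp
  · intro h; exact absurd (Finset.mem_univ k) h

lemma adj_up (hN : 2 ≤ N) (x : Torus d N) (k : Fin d) :
    torusAdj x (Function.update x k (x k + 1)) := by
  apply adj_sum_single hN
  have : x k - (x k + 1) = -1 := by ring
  rw [this, val_neg_one' hN]
  right; constructor
  · rfl
  · omega

lemma adj_down (hN : 2 ≤ N) (x : Torus d N) (k : Fin d) :
    torusAdj x (Function.update x k (x k - 1)) := by
  apply adj_sum_single hN
  have : x k - (x k - 1) = 1 := by ring
  rw [this, val_one'' hN]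
  left; exact ⟨rfl, rfl⟩

/-- the single-direction elementary flow attached to a field `F`. -/
def dirFlow (k : Fin d) (F : Torus d N → ℝ) (x x' : Torus d N) : ℝ :=
  (if x' = Function.update x k (x k + 1) then F x else 0)
  - (if x = Function.update x' k (x' k + 1) then F x' else 0)

lemma up_eq_iff (x x' : Torus d N) (k : Fin d) :
    x = Function.update x' k (x' k + 1) ↔ x' = Function.update x k (x k - 1) := by
  constructor
  · intro h
    funext i
    by_cases hik : i = k
    · subst hik
      rw [Function.update_self, h, Function.update_self]
      ring
    · rw [Function.update_of_ne hik, h, Function.update_of_ne hik]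
  · intro h
    funext i
    by_cases hik : i = k
    · subst hik
      rw [Function.update_self, h, Function.update_self]
      ring
    · rw [Function.update_of_ne hik, h, Function.update_of_ne hik]

lemma dirFlow_isFlow (hN : 2 ≤ N) (k : Fin d) (F : Torus d N → ℝ) :
    IsFlow torusAdj (dirFlow k F) := by
  intro x x'
  constructor
  · intro _; unfold dirFlow; ring
  · intro hnadj
    unfold dirFlow
    rw [if_neg, if_neg]
    · ring
    · intro h
      rw [up_eq_iff] at h
      exact hnadj (h ▸ adj_down hN x k)
    · intro h
      exact hnadj (h ▸ adj_up hN x k)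

lemma dirFlow_div (hN : 2 ≤ N) (k : Fin d) (F : Torus d N → ℝ) (x : Torus d N) :
    torusDiv (dirFlow k F) x = F x - F (Function.update x k (x k - 1)) := by
  unfold torusDiv
  rw [tsum_fintype]
  have hpt : ∀ x' : Torus d N,
      (if torusAdj x x' then dirFlow k F x x' else 0) = dirFlow k F x x' := by
    intro x'
    by_cases hadj : torusAdj x x'
    · rw [if_pos hadj]
    · rw [if_neg hadj, ((dirFlow_isFlow hN k F) x x').2 hadj]
  rw [Finset.sum_congr rfl (fun x' _ => hpt x')]
  unfold dirFlow
  rw [Finset.sum_sub_distrib]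
  congr 1
  · rw [Finset.sum_ite_eq' Finset.univ (Function.update x k (x k + 1)) (fun _ => F x)]
    simp
  · have : ∀ x' : Torus d N,
        (if x = Function.update x' k (x' k + 1) then F x' else 0)
        = (if x' = Function.update x k (x k - 1) then F x' else 0) := by
      intro x'; simp only [up_eq_iff]
    rw [Finset.sum_congr rfl (fun x' _ => this x')]
    rw [Finset.sum_ite_eq' Finset.univ (Function.update x k (x k - 1)) F]
    simp

lemma dirFlow_abs_le (k : Fin d) (F : Torus d N → ℝ) (C : ℝ) (hC : ∀ y, |F y| ≤ C)
    (x x' : Torus d N) : |dirFlow k F x x'| ≤ 2 * C := by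
  unfold dirFlow
  have h1 : |(if x' = Function.update x k (x k + 1) then F x else 0)| ≤ C := by
    split
    · exact hC x
    · simpa using le_trans (le_refl 0) ((abs_nonneg (F x)).trans (hC x))
  have h2 : |(if x = Function.update x' k (x' k + 1) then F x' else 0)| ≤ C := by
    split
    · exact hC x'
    · simpa using le_trans (le_refl 0) ((abs_nonneg (F x)).trans (hC x))
  calc |_ - _| ≤ _ + _ := abs_sub _ _
    _ ≤ C + C := add_le_add h1 h2
    _ = 2 * C := by ring

lemma isFlow_add {J1 J2 : Torus d N → Torus d N → ℝ} (h1 : IsFlow torusAdj J1)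
    (h2 : IsFlow torusAdj J2) : IsFlow torusAdj (J1 + J2) := by
  intro x x'
  constructor
  · intro hadj
    have := (h1 x x').1 hadj
    have := (h2 x x').1 hadj
    simp only [Pi.add_apply]
    rw [(h1 x x').1 hadj, (h2 x x').1 hadj]; ring
  · intro hnadj
    simp only [Pi.add_apply]
    rw [(h1 x x').2 hnadj, (h2 x x').2 hnadj]; ring

lemma torusDiv_add (J1 J2 : Torus d N → Torus d N → ℝ) (x : Torus d N) :
    torusDiv (J1 + J2) x = torusDiv J1 x + torusDiv J2 x := by
  unfold torusDiv
  rw [tsum_fintype, tsum_fintype, tsum_fintype, ← Finset.sum_add_distrib]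
  apply Finset.sum_congr rfl
  intro x' _
  by_cases hadj : torusAdj x x' <;> simp [hadj]

end S7
set_option linter.unusedSectionVars false
namespace S7
variable {d N : ℕ} [NeZero N]

/-- iterated averaging along a list of directions -/
def iterAvg : List (Fin d) → (Torus d N → ℝ) → (Torus d N → ℝ)
  | [], h => h
  | k :: L, h => iterAvg L (tavg k h)

/-- the flow transporting `h` to its iterated average along `L` -/
def flowOf : List (Fin d) → (Torus d N → ℝ) → (Torus d N → Torus d N → ℝ)
  | [], _ => 0
  | k :: L, h => dirFlow k (tF k h) + flowOf L (tavg k h)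

lemma flowOf_isFlow (hN : 2 ≤ N) (L : List (Fin d)) (h : Torus d N → ℝ) :
    IsFlow torusAdj (flowOf L h) := by
  induction L generalizing h with
  | nil =>
    intro x x'
    exact ⟨fun _ => by simp [flowOf], fun _ => by simp [flowOf]⟩
  | cons k L ih =>
    exact isFlow_add (dirFlow_isFlow hN k (tF k h)) (ih (tavg k h))

lemma torusDiv_zero (x : Torus d N) : torusDiv (0 : Torus d N → Torus d N → ℝ) x = 0 := by
  unfold torusDiv
  rw [tsum_fintype]
  apply Finset.sum_eq_zero
  intro x' _
  split <;> rfl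

lemma flowOf_div (hN : 2 ≤ N) (L : List (Fin d)) (h : Torus d N → ℝ) (x : Torus d N) :
    torusDiv (flowOf L h) x = iterAvg L h x - h x := by
  induction L generalizing h with
  | nil => simp [flowOf, iterAvg, torusDiv_zero]
  | cons k L ih =>
    show torusDiv (dirFlow k (tF k h) + flowOf L (tavg k h)) x = _
    rw [torusDiv_add, dirFlow_div hN, ih (tavg k h), tF_grad hN]
    show tavg k h x - h x + (iterAvg L (tavg k h) x - tavg k h x) =
      iterAvg (k :: L) h x - h x
    simp only [iterAvg]
    ring

lemma flowOf_bound (B : ℝ) (L : List (Fin d)) :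
    ∀ h : Torus d N → ℝ, (∀ y, |h y| ≤ B) → ∀ x x' : Torus d N,
      |flowOf L h x x'| ≤ (L.length : ℝ) * (4 * (N * B)) := by
  induction L with
  | nil => intro h hb x x'; simp [flowOf]
  | cons k L ih =>
    intro h hb x x'
    have htF : ∀ y, |tF k h y| ≤ 2 * (N * B) :=
      fun y => tF_bound k h y (N * B) (linesum_of_ptwise k h B hb)
    have hdir : |dirFlow k (tF k h) x x'| ≤ 2 * (2 * (N * B)) :=
      dirFlow_abs_le k _ _ htF x x'
    have hrest := ih (tavg k h) (tavg_abs_le k h B hb) x x'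
    have hsplit : flowOf (k :: L) h x x' =
        dirFlow k (tF k h) x x' + flowOf L (tavg k h) x x' := rfl
    rw [hsplit]
    calc |dirFlow k (tF k h) x x' + flowOf L (tavg k h) x x'|
        ≤ |dirFlow k (tF k h) x x'| + |flowOf L (tavg k h) x x'| := abs_add_le _ _
      _ ≤ 2 * (2 * (N * B)) + (L.length : ℝ) * (4 * (N * B)) := add_le_add hdir hrest
      _ = ((k :: L).length : ℝ) * (4 * (N * B)) := by
          simp only [List.length_cons]
          push_cast
          ring

/-- invariance in direction `k` is preserved by `tavg k'` -/
lemma tavg_pres_indep (k k' : Fin d) (h : Torus d N → ℝ)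
    (hh : ∀ x c, h (Function.update x k c) = h x) :
    ∀ x c, tavg k' h (Function.update x k c) = tavg k' h x := by
  intro x c
  by_cases hkk : k' = k
  · subst hkk; exact tavg_update k' h x c
  · unfold tavg
    congr 1
    apply Finset.sum_congr rfl
    intro j _
    rw [Function.update_comm (fun hc => hkk hc.symm) c j x, hh]

lemma tavg_self_indep (k : Fin d) (h : Torus d N → ℝ) :
    ∀ x c, tavg k h (Function.update x k c) = tavg k h x :=
  fun x c => tavg_update k h x c

lemma iterAvg_pres_indep (L : List (Fin d)) (k : Fin d) (h : Torus d N → ℝ)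
    (hh : ∀ x c, h (Function.update x k c) = h x) :
    ∀ x c, iterAvg L h (Function.update x k c) = iterAvg L h x := by
  induction L generalizing h with
  | nil => exact hh
  | cons k' L ih => exact ih (tavg k' h) (tavg_pres_indep k k' h hh)

lemma iterAvg_indep (L : List (Fin d)) (k : Fin d) (hk : k ∈ L) (h : Torus d N → ℝ) :
    ∀ x c, iterAvg L h (Function.update x k c) = iterAvg L h x := by
  induction L generalizing h with
  | nil => cases hk
  | cons k' L ih =>
    rcases List.mem_cons.1 hk with hkk | hk'
    · subst hkk
      exact iterAvg_pres_indep L k (tavg k h) (tavg_self_indep k h)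
    · exact ih hk' (tavg k' h)

lemma const_of_indep (h : Torus d N → ℝ)
    (hh : ∀ (k : Fin d) x c, h (Function.update x k c) = h x) (x y : Torus d N) :
    h x = h y := by
  have key : ∀ s : Finset (Fin d), h (fun i => if i ∈ s then y i else x i) = h x := by
    intro s
    refine Finset.induction_on s ?_ ?_
    · simp
    · intro a s ha ih
      have hfun : (fun i => if i ∈ insert a s then y i else x i) =
          Function.update (fun i => if i ∈ s then y i else x i) a (y a) := by
        funext i
        by_cases hia : i = a
        · subst hia; simp [Function.update_self]
        · rw [Function.update_of_ne hia]
          simp [Finset.mem_insert, hia]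
      rw [hfun, hh, ih]
  have := key Finset.univ
  simpa using this.symm

lemma tavg_sum (k : Fin d) (h : Torus d N → ℝ) :
    ∑ x : Torus d N, tavg k h x = ∑ x : Torus d N, h x := by
  have hNpos : (0:ℝ) < N := by
    have := Nat.pos_of_ne_zero (NeZero.ne N); exact_mod_cast this
  unfold tavg
  rw [← Finset.sum_div, div_eq_iff hNpos.ne']
  have h1 : ∑ x : Torus d N, ∑ j : ZMod N, h (Function.update x k j)
      = ∑ p : Torus d N × ZMod N, h (Function.update p.1 k p.2) :=
    (Fintype.sum_prod_type
      (f := fun p : Torus d N × ZMod N => h (Function.update p.1 k p.2))).symm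
  have h2 : ∑ p : Torus d N × ZMod N, h (Function.update p.1 k p.2)
      = ∑ p : Torus d N × ZMod N, h p.1 := by
    refine Finset.sum_nbij'
      (i := fun p : Torus d N × ZMod N => (Function.update p.1 k p.2, p.1 k))
      (j := fun p : Torus d N × ZMod N => (Function.update p.1 k p.2, p.1 k))
      ?_ ?_ ?_ ?_ ?_
    · intro a _; exact Finset.mem_univ _
    · intro a _; exact Finset.mem_univ _
    · intro a _
      simp [Function.update_idem, Function.update_self, Function.update_eq_self]
    · intro a _
      simp [Function.update_idem, Function.update_self, Function.update_eq_self]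
    · intro a _; rfl
  rw [h1, h2, Fintype.sum_prod_type (f := fun p : Torus d N × ZMod N => h p.1)]
  simp only [Finset.sum_const, Finset.card_univ, ZMod.card, nsmul_eq_mul]
  rw [← Finset.mul_sum, mul_comm]

lemma iterAvg_sum (L : List (Fin d)) (h : Torus d N → ℝ) :
    ∑ x : Torus d N, iterAvg L h x = ∑ x : Torus d N, h x := by
  induction L generalizing h with
  | nil => rfl
  | cons k L ih =>
    show ∑ x : Torus d N, iterAvg L (tavg k h) x = _
    rw [ih (tavg k h), tavg_sum]

/-- if `L` contains every direction, the iterated average is `ν h`. -/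
lemma iterAvg_eq_nu (L : List (Fin d)) (hL : ∀ k : Fin d, k ∈ L) (h : Torus d N → ℝ)
    (x : Torus d N) : iterAvg L h x = nu d N h := by
  have hNpos : (0:ℝ) < N := by
    have := Nat.pos_of_ne_zero (NeZero.ne N); exact_mod_cast this
  have hconst : ∀ y : Torus d N, iterAvg L h y = iterAvg L h x :=
    fun y => const_of_indep (iterAvg L h) (fun k => iterAvg_indep L k (hL k) h) y x
  have hcard : ((Finset.univ : Finset (Torus d N)).card : ℝ) = (N : ℝ) ^ d := by
    rw [Finset.card_univ]
    simp [ZMod.card]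
  have hsum2 : ∑ y : Torus d N, iterAvg L h y =
      ((Finset.univ : Finset (Torus d N)).card) • iterAvg L h x := by
    rw [← Finset.sum_const]
    exact Finset.sum_congr rfl (fun y _ => hconst y)
  have hval : ((N:ℝ) ^ d) * iterAvg L h x = ∑ y : Torus d N, h y := by
    rw [← iterAvg_sum L h, hsum2, nsmul_eq_mul, hcard]
  unfold nu
  rw [tsum_fintype, ← hval]
  exact (mul_div_cancel_left₀ _ (pow_ne_zero d hNpos.ne')).symm
end S7
namespace S7
variable {d N : ℕ} [NeZero N]

lemma mem_bdry (hN : 2 ≤ N) (x : Torus d N) (hx : x ∈ torusBdry d N) :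
    ∃ i, (x i).val = 0 ∨ (x i).val = N - 1 := by
  obtain ⟨z, ⟨hbox, i, hi⟩, hproj⟩ := hx
  refine ⟨i, ?_⟩
  have hxi : x i = ((z i : ℤ) : ZMod N) := by rw [← hproj]; rfl
  rcases hi with h0 | h1
  · left; rw [hxi, h0]; simp
  · right
    have hcast : ((z i : ℤ) : ZMod N) = ((N - 1 : ℕ) : ZMod N) := by
      rw [h1, show ((N : ℤ) - 1) = ((N - 1 : ℕ) : ℤ) from by omega, Int.cast_natCast]
    rw [hxi, hcast, ZMod.val_natCast, Nat.mod_eq_of_lt (by omega)]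

open Classical in
/-- decomposition of `g` by the least boundary coordinate. -/
def gB {d N : ℕ} (g : Torus d N → ℝ) (i : Fin d) (x : Torus d N) : ℝ :=
  if ((x i).val = 0 ∨ (x i).val = N - 1) ∧
     (∀ j : Fin d, j < i → ¬((x j).val = 0 ∨ (x j).val = N - 1)) then g x else 0

lemma gB_sum (hN : 2 ≤ N) (g : Torus d N → ℝ) (hg : ∀ x ∉ torusBdry d N, g x = 0)
    (x : Torus d N) : ∑ i : Fin d, gB g i x = g x := by
  classical
  by_cases hex : ∃ i : Fin d, (x i).val = 0 ∨ (x i).val = N - 1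
  · set s : Finset (Fin d) :=
      Finset.univ.filter (fun i => (x i).val = 0 ∨ (x i).val = N - 1) with hs
    have hsne : s.Nonempty := by
      obtain ⟨i, hi⟩ := hex; exact ⟨i, Finset.mem_filter.2 ⟨Finset.mem_univ _, hi⟩⟩
    set i0 := s.min' hsne with hi0def
    have hi0s : i0 ∈ s := s.min'_mem hsne
    have hi0 : (x i0).val = 0 ∨ (x i0).val = N - 1 := (Finset.mem_filter.1 hi0s).2
    rw [Finset.sum_eq_single i0]
    · unfold gB; rw [if_pos]
      exact ⟨hi0, fun j hj hjb =>
        absurd hj (not_lt.2 (s.min'_le j (Finset.mem_filter.2 ⟨Finset.mem_univ _, hjb⟩)))⟩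
    · intro i _ hii0
      unfold gB; rw [if_neg]
      rintro ⟨hbi, hall⟩
      have h1 : i0 ≤ i := s.min'_le i (Finset.mem_filter.2 ⟨Finset.mem_univ _, hbi⟩)
      have h2 : i0 < i := h1.lt_of_ne (fun he => hii0 he.symm)
      exact (hall i0 h2) hi0
    · intro h; exact absurd (Finset.mem_univ i0) h
  · have hx : x ∉ torusBdry d N := fun hmem => hex (mem_bdry hN x hmem)
    rw [hg x hx]
    apply Finset.sum_eq_zero
    intro i _
    unfold gB; rw [if_neg]
    rintro ⟨hbi, _⟩; exact hex ⟨i, hbi⟩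

lemma gB_abs_le (g : Torus d N → ℝ) (M : ℝ) (hM : ∀ y, |g y| ≤ M) (i : Fin d)
    (y : Torus d N) : |gB g i y| ≤ M := by
  unfold gB
  split
  · exact hM y
  · simpa using le_trans (abs_nonneg (g y)) (hM y)

lemma gB_linesum (hN : 2 ≤ N) (g : Torus d N → ℝ) (M : ℝ) (hM : ∀ y, |g y| ≤ M)
    (i : Fin d) (y : Torus d N) :
    ∑ j : ZMod N, |gB g i (Function.update y i j)| ≤ 2 * M := by
  classical
  have hM0 : 0 ≤ M := le_trans (abs_nonneg _) (hM y)
  have hz : ∀ j : ZMod N, j ∉ ({0, -1} : Finset (ZMod N)) →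
      |gB g i (Function.update y i j)| = 0 := by
    intro j hj
    suffices h : gB g i (Function.update y i j) = 0 by rw [h, abs_zero]
    unfold gB
    rw [if_neg]
    rintro ⟨hc, -⟩
    rw [Function.update_self] at hc
    apply hj
    rcases hc with h0 | h1
    · simp [(ZMod.val_eq_zero j).1 h0]
    · have : j = ((N - 1 : ℕ) : ZMod N) := by
        conv_lhs => rw [← ZMod.natCast_zmod_val j]
        rw [h1]
      rw [this, cast_pred (by omega : 1 ≤ N)]
      simp
  have hsub : ∑ j : ZMod N, |gB g i (Function.update y i j)| =
      ∑ j ∈ ({0, -1} : Finset (ZMod N)), |gB g i (Function.update y i j)| :=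
    (Finset.sum_subset (Finset.subset_univ _) (fun j _ hj => hz j hj)).symm
  rw [hsub]
  calc ∑ j ∈ ({0, -1} : Finset (ZMod N)), |gB g i (Function.update y i j)|
      ≤ ∑ _j ∈ ({0, -1} : Finset (ZMod N)), M :=
        Finset.sum_le_sum (fun j _ => gB_abs_le g M hM i _)
    _ = (({0, -1} : Finset (ZMod N)).card : ℝ) * M := by
        rw [Finset.sum_const, nsmul_eq_mul]
    _ ≤ 2 * M := by
        have hcard : ({0, -1} : Finset (ZMod N)).card ≤ 2 :=
          le_trans (Finset.card_insert_le _ _) (by simp)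
        have : ((({0, -1} : Finset (ZMod N)).card : ℕ) : ℝ) ≤ 2 := by exact_mod_cast hcard
        exact mul_le_mul_of_nonneg_right this hM0

end S7
namespace S7
variable {d N : ℕ} [NeZero N]

lemma torusDiv_finsum {ι : Type*} [Fintype ι] (Ji : ι → Torus d N → Torus d N → ℝ)
    (x : Torus d N) :
    torusDiv (fun a b => ∑ i, Ji i a b) x = ∑ i, torusDiv (Ji i) x := by
  unfold torusDiv
  simp_rw [tsum_fintype]
  calc ∑ x' : Torus d N, (if torusAdj x x' then ∑ i, Ji i x x' else 0)
      = ∑ x' : Torus d N, ∑ i, (if torusAdj x x' then Ji i x x' else 0) :=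
        Finset.sum_congr rfl (fun x' _ => by split <;> simp)
    _ = ∑ i, ∑ x' : Torus d N, (if torusAdj x x' then Ji i x x' else 0) :=
        Finset.sum_comm

lemma isFlow_finsum {ι : Type*} [Fintype ι] (Ji : ι → Torus d N → Torus d N → ℝ)
    (hJ : ∀ i, IsFlow torusAdj (Ji i)) :
    IsFlow torusAdj (fun a b => ∑ i, Ji i a b) := by
  intro x x'
  constructor
  · intro hadj
    show (∑ i, Ji i x x') = -∑ i, Ji i x' x
    rw [Finset.sum_congr rfl (fun i _ => ((hJ i) x x').1 hadj)]
    simp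
  · intro hnadj
    show (∑ i, Ji i x x') = 0
    exact Finset.sum_eq_zero (fun i _ => ((hJ i) x x').2 hnadj)

end S7


/-- There is `c = c(d)` such that for every `N ≥ 2` and every `g` on the torus
vanishing outside `S` (the image of the interior boundary of the box), there is a flow `J` with
`div J + g ≡ ν(g)` and `|J|_∞ ≤ c |g|_∞`. -/
theorem statement7 (d : ℕ) (hd : 1 ≤ d) :
    ∃ c : ℝ, 0 < c ∧ ∀ N : ℕ, 2 ≤ N → ∀ g : Torus d N → ℝ,
      (∀ x ∉ torusBdry d N, g x = 0) →
      ∃ J : Torus d N → Torus d N → ℝ, IsFlow torusAdj J ∧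
        (∀ x, torusDiv J x + g x = nu d N g) ∧
        torusFlowSup J ≤ c * torusSupNorm g := by
  classical
  refine ⟨16 * (d : ℝ) ^ 2, ?_, ?_⟩
  · have : (0:ℝ) < d := by exact_mod_cast hd
    positivity
  intro N hN g hg
  haveI : NeZero N := ⟨by omega⟩
  have hNpos : (0:ℝ) < N := by
    have : 0 < N := by omega
    exact_mod_cast this
  set M := torusSupNorm g with hMdef
  have hM : ∀ y, |g y| ≤ M := by
    intro y
    rw [hMdef]
    unfold torusSupNorm
    exact le_ciSup (Set.Finite.bddAbove (Set.finite_range (fun x => |g x|))) y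
  have hM0 : 0 ≤ M := le_trans (abs_nonneg _) (hM (fun _ => 0))
  -- the per-coordinate lists
  set rest : Fin d → List (Fin d) := fun i => (List.finRange d).filter (· ≠ i) with hrest
  set L : Fin d → List (Fin d) := fun i => i :: rest i with hL
  have hLmem : ∀ i k : Fin d, k ∈ L i := by
    intro i k
    by_cases hk : k = i
    · subst hk; exact List.mem_cons_self
    · exact List.mem_cons_of_mem _ (List.mem_filter.2 ⟨List.mem_finRange k, by simp [hk]⟩)
  set J : Torus d N → Torus d N → ℝ :=
    fun a b => ∑ i, S7.flowOf (L i) (S7.gB g i) a b with hJ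
  refine ⟨J, ?_, ?_, ?_⟩
  · exact S7.isFlow_finsum _ (fun i => S7.flowOf_isFlow hN (L i) (S7.gB g i))
  · intro x
    have hdiv : torusDiv J x = ∑ i, (nu d N (S7.gB g i) - S7.gB g i x) := by
      rw [hJ, S7.torusDiv_finsum]
      refine Finset.sum_congr rfl (fun i _ => ?_)
      rw [S7.flowOf_div hN, S7.iterAvg_eq_nu (L i) (hLmem i) (S7.gB g i) x]
    have hnu : ∑ i, nu d N (S7.gB g i) = nu d N g := by
      unfold nu
      simp_rw [tsum_fintype]
      rw [← Finset.sum_div]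
      congr 1
      rw [Finset.sum_comm]
      exact Finset.sum_congr rfl (fun x' _ => S7.gB_sum hN g hg x')
    rw [hdiv, Finset.sum_sub_distrib, hnu, S7.gB_sum hN g hg x]
    ring
  · -- the bound
    have hper : ∀ (i : Fin d) (a b : Torus d N),
        |S7.flowOf (L i) (S7.gB g i) a b| ≤ 8 * M + (d : ℝ) * (8 * M) := by
      intro i a b
      have hlinesum : ∀ y, ∑ j : ZMod N, |S7.gB g i (Function.update y i j)| ≤ 2 * M :=
        S7.gB_linesum hN g M hM i
      have htF : ∀ y, |S7.tF i (S7.gB g i) y| ≤ 2 * (2 * M) :=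
        fun y => S7.tF_bound i _ y (2 * M) hlinesum
      have hdir : |S7.dirFlow i (S7.tF i (S7.gB g i)) a b| ≤ 2 * (2 * (2 * M)) :=
        S7.dirFlow_abs_le i _ _ htF a b
      have havg : ∀ y, |S7.tavg i (S7.gB g i) y| ≤ 2 * M / N := by
        intro y
        unfold S7.tavg
        rw [abs_div, abs_of_nonneg hNpos.le]
        gcongr
        exact (Finset.abs_sum_le_sum_abs _ _).trans (hlinesum y)
      have hrestb := S7.flowOf_bound (2 * M / N) (rest i) (S7.tavg i (S7.gB g i)) havg a b
      have hNval : (N : ℝ) * (2 * M / N) = 2 * M := by field_simp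
      have hlen : (((rest i).length : ℕ) : ℝ) ≤ (d : ℝ) := by
        have h1 : (rest i).length ≤ d := by
          rw [hrest]
          exact le_trans (List.length_filter_le _ _) (le_of_eq (List.length_finRange))
        exact_mod_cast h1
      have hsplit : S7.flowOf (L i) (S7.gB g i) a b =
          S7.dirFlow i (S7.tF i (S7.gB g i)) a b
            + S7.flowOf (rest i) (S7.tavg i (S7.gB g i)) a b := rfl
      rw [hsplit]
      calc |S7.dirFlow i (S7.tF i (S7.gB g i)) a b
            + S7.flowOf (rest i) (S7.tavg i (S7.gB g i)) a b|
          ≤ |S7.dirFlow i (S7.tF i (S7.gB g i)) a b|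
            + |S7.flowOf (rest i) (S7.tavg i (S7.gB g i)) a b| := abs_add_le _ _
        _ ≤ 2 * (2 * (2 * M)) + ((rest i).length : ℝ) * (4 * ((N : ℝ) * (2 * M / N))) :=
            add_le_add hdir hrestb
        _ = 8 * M + ((rest i).length : ℝ) * (8 * M) := by rw [hNval]; ring
        _ ≤ 8 * M + (d : ℝ) * (8 * M) := by
            have h8 : (0:ℝ) ≤ 8 * M := by positivity
            exact add_le_add_right (mul_le_mul_of_nonneg_right hlen h8) _
    have hpt : ∀ p : Torus d N × Torus d N, |J p.1 p.2| ≤ 16 * (d : ℝ) ^ 2 * M := by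
      intro p
      calc |J p.1 p.2| ≤ ∑ i, |S7.flowOf (L i) (S7.gB g i) p.1 p.2| :=
            Finset.abs_sum_le_sum_abs _ _
        _ ≤ ∑ _i : Fin d, (8 * M + (d : ℝ) * (8 * M)) :=
            Finset.sum_le_sum (fun i _ => hper i p.1 p.2)
        _ = (d : ℝ) * (8 * M + (d : ℝ) * (8 * M)) := by
            rw [Finset.sum_const, nsmul_eq_mul, Finset.card_univ, Fintype.card_fin]
        _ ≤ 16 * (d : ℝ) ^ 2 * M := by
            have hd1 : (1:ℝ) ≤ (d : ℝ) := by exact_mod_cast hd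
            have h1 : (d:ℝ) ≤ (d:ℝ) ^ 2 := by nlinarith [hd1]
            nlinarith [hM0, hd1, mul_le_mul_of_nonneg_right h1 hM0]
    unfold torusFlowSup
    exact ciSup_le hpt
end
end

section
/- Let d ≥ 1. There is a constant c depending only on d such that for every N ≥ 1 and every function h : T_N → ℝ, there exists a flow L on the edges of T_N with div L(x) + h(x) = ν(h) for every x ∈ T_N, and |L|_∞ ≤ c N |h|_∞. -/
open Filter Topology

noncomputable section

/-! ### Auxiliary construction for Statement 8 -/

namespace Statement8Aux

open Finset

variable (d N : ℕ) [NeZero N] (h : Torus d N → ℝ)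

/-- Unit step in direction `k` on the torus. -/
def ee (k : Fin d) : Torus d N := fun i => if i = k then 1 else 0

/-- The function `ν(h) - h`, which the divergence must match. -/
def gg : Torus d N → ℝ := fun x => nu d N h - h x

open Classical in
/-- Sum of `gg` over the slab where coordinates `≥ k` agree with `x`. -/
def SS (k : ℕ) (x : Torus d N) : ℝ :=
  ∑ y : Torus d N, if (∀ i : Fin d, k ≤ (i : ℕ) → y i = x i) then gg d N h y else 0

/-- Average of `gg` over the first `k` coordinates. -/
def HH (k : ℕ) (x : Torus d N) : ℝ := SS d N h k x / (N : ℝ) ^ k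

/-- Difference of successive averages. -/
def dd (k : ℕ) (x : Torus d N) : ℝ := HH d N h k x - HH d N h (k + 1) x

/-- Prefix sums of `dd k` along direction `k`. -/
def FF (k : Fin d) (x : Torus d N) : ℝ :=
  ∑ m ∈ Finset.range ((x k).val + 1), dd d N h (k : ℕ) (Function.update x k (m : ZMod N))

/-- The flow. -/
def LL (x x' : Torus d N) : ℝ :=
  ∑ k : Fin d, ((if x' = x + ee d N k then FF d N h k x else 0)
    - (if x = x' + ee d N k then FF d N h k x' else 0))

lemma card_torus : Fintype.card (Torus d N) = N ^ d := by
  simp [Fintype.card_fun]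

lemma sum_g : ∑ y : Torus d N, gg d N h y = 0 := by
  have hN : ((N : ℝ)) ^ d ≠ 0 := by
    have : (N : ℝ) ≠ 0 := Nat.cast_ne_zero.mpr (NeZero.ne N)
    positivity
  simp only [gg, nu, tsum_fintype, Finset.sum_sub_distrib, Finset.sum_const,
    Finset.card_univ, card_torus, nsmul_eq_mul]
  push_cast
  field_simp
  ring

lemma S_zero (x : Torus d N) : SS d N h 0 x = gg d N h x := by
  unfold SS
  have : ∀ y : Torus d N,
      (if (∀ i : Fin d, 0 ≤ (i : ℕ) → y i = x i) then gg d N h y else 0)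
        = if y = x then gg d N h y else 0 := by
    intro y
    apply if_congr _ rfl rfl
    simp [funext_iff]
  rw [Finset.sum_congr rfl fun y _ => this y]
  simp

lemma S_top (x : Torus d N) (k : ℕ) (hk : d ≤ k) : SS d N h k x = 0 := by
  unfold SS
  rw [← sum_g d N h]
  apply Finset.sum_congr rfl
  intro y _
  rw [if_pos]
  intro i hi
  exact absurd (lt_of_lt_of_le i.is_lt hk) (not_lt.mpr hi)

lemma update_sub_ee (k : Fin d) (x : Torus d N) (t : ZMod N) :
    Function.update (x - ee d N k) k t = Function.update x k t := by
  funext i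
  by_cases hik : i = k <;> simp [Function.update_apply, hik, ee]

lemma sub_ee_eq (k : Fin d) (x : Torus d N) :
    x - ee d N k = Function.update x k (x k - 1) := by
  funext i
  by_cases hik : i = k <;> simp [Function.update_apply, hik, ee]

lemma S_update (k : Fin d) (x : Torus d N) (t : ZMod N) :
    SS d N h ((k : ℕ) + 1) (Function.update x k t) = SS d N h ((k : ℕ) + 1) x := by
  unfold SS
  apply Finset.sum_congr rfl
  intro y _
  apply if_congr _ rfl rfl
  have hup : ∀ i : Fin d, (k : ℕ) + 1 ≤ (i : ℕ) → Function.update x k t i = x i := by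
    intro i hi
    rw [Function.update_apply, if_neg]
    intro hik
    rw [hik] at hi
    omega
  constructor
  · intro H i hi; exact (H i hi).trans (hup i hi)
  · intro H i hi; exact (H i hi).trans (hup i hi).symm

lemma S_rec (k : Fin d) (x : Torus d N) :
    ∑ t : ZMod N, SS d N h (k : ℕ) (Function.update x k t) = SS d N h ((k : ℕ) + 1) x := by
  unfold SS
  rw [Finset.sum_comm]
  apply Finset.sum_congr rfl
  intro y _
  have key : ∀ t : ZMod N,
      (∀ i : Fin d, (k : ℕ) ≤ (i : ℕ) → y i = Function.update x k t i)
        ↔ (t = y k ∧ ∀ i : Fin d, (k : ℕ) + 1 ≤ (i : ℕ) → y i = x i) := by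
    intro t
    constructor
    · intro H
      refine ⟨((H k le_rfl).trans (Function.update_self _ _ _)).symm, ?_⟩
      intro i hi
      have hik : i ≠ k := by
        intro e; rw [e] at hi; omega
      exact (H i (by omega)).trans (by rw [Function.update_apply, if_neg hik])
    · rintro ⟨rfl, H2⟩ i hi
      by_cases hik : i = k
      · subst hik; rw [Function.update_self]
      · have hik' : (i : ℕ) ≠ (k : ℕ) := fun e => hik (Fin.ext e)
        rw [Function.update_apply, if_neg hik]
        exact H2 i (by omega)
  rw [Finset.sum_congr rfl fun t _ => if_congr (key t) rfl rfl]
  by_cases hD : ∀ i : Fin d, (k : ℕ) + 1 ≤ (i : ℕ) → y i = x i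
  · rw [Finset.sum_congr rfl fun t _ => if_congr (and_iff_left hD) rfl rfl, if_pos hD,
      Finset.sum_ite_eq' Finset.univ (y k) fun _ => gg d N h y, if_pos (Finset.mem_univ _)]
  · rw [if_neg hD]
    apply Finset.sum_eq_zero
    intro t _
    exact if_neg fun hc => hD hc.2

lemma line_sum (k : Fin d) (x : Torus d N) :
    ∑ t : ZMod N, dd d N h (k : ℕ) (Function.update x k t) = 0 := by
  have hN : (N : ℝ) ≠ 0 := Nat.cast_ne_zero.mpr (NeZero.ne N)
  unfold dd HH
  rw [Finset.sum_sub_distrib, ← Finset.sum_div, S_rec]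
  rw [Finset.sum_congr rfl fun t _ => by rw [S_update d N h k x t]]
  rw [Finset.sum_const, Finset.card_univ, ZMod.card, nsmul_eq_mul, pow_succ]
  field_simp
  ring

lemma telescope (x : Torus d N) :
    ∑ m ∈ Finset.range d, dd d N h m x = gg d N h x := by
  unfold dd
  rw [Finset.sum_range_sub' (fun m => HH d N h m x) d]
  unfold HH
  rw [S_zero, S_top d N h x d le_rfl, pow_zero, div_one, zero_div, sub_zero]

lemma sum_zmod (f : ZMod N → ℝ) :
    ∑ m ∈ Finset.range N, f ((m : ℕ) : ZMod N) = ∑ t : ZMod N, f t := by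
  apply Finset.sum_bij (fun m _ => ((m : ℕ) : ZMod N))
  · intro a _; exact Finset.mem_univ _
  · intro a ha b hb hab
    rw [← ZMod.val_cast_of_lt (Finset.mem_range.mp ha), hab,
      ZMod.val_cast_of_lt (Finset.mem_range.mp hb)]
  · intro t _
    exact ⟨t.val, Finset.mem_range.mpr t.val_lt, ZMod.natCast_rightInverse t⟩
  · intro a _; rfl

lemma F_diff (k : Fin d) (x : Torus d N) :
    FF d N h k x - FF d N h k (x - ee d N k) = dd d N h (k : ℕ) x := by
  have hNpos : N ≠ 0 := NeZero.ne N
  rw [sub_ee_eq]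
  simp only [FF, Function.update_self, Function.update_idem]
  by_cases h0 : x k = 0
  · have hv0 : (x k).val = 0 := by rw [h0, ZMod.val_zero]
    have hv1 : (x k - 1).val = N - 1 := by
      rw [h0, zero_sub]
      obtain ⟨m, rfl⟩ := Nat.exists_eq_succ_of_ne_zero hNpos
      simpa using ZMod.val_neg_one m
    rw [hv0, hv1, Nat.sub_add_cancel (by omega : 1 ≤ N)]
    rw [Finset.sum_range_one]
    have hupd : Function.update x k (((0 : ℕ) : ZMod N)) = x := by
      rw [Nat.cast_zero, ← h0, Function.update_eq_self]
    rw [hupd]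
    rw [sum_zmod N (fun t => dd d N h (k : ℕ) (Function.update x k t)), line_sum]
    ring
  · have hvpos : (x k).val ≠ 0 := fun e => h0 ((ZMod.val_eq_zero _).mp e)
    have hc : (((x k).val : ℕ) : ZMod N) = x k := ZMod.natCast_rightInverse (x k)
    have hv1 : (x k - 1).val = (x k).val - 1 := by
      have h1 : x k - 1 = (((x k).val - 1 : ℕ) : ZMod N) := by
        rw [Nat.cast_sub (Nat.one_le_iff_ne_zero.mpr hvpos), Nat.cast_one, hc]
      have hlt : (x k).val - 1 < N := by
        have := ZMod.val_lt (x k); omega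
      rw [h1, ZMod.val_cast_of_lt hlt]
    rw [hv1, Nat.sub_add_cancel (by omega : 1 ≤ (x k).val)]
    rw [Finset.sum_range_succ]
    have hupd : Function.update x k ((((x k).val : ℕ)) : ZMod N) = x := by
      rw [hc, Function.update_eq_self]
    rw [hupd]
    ring

lemma adj_add (hN2 : 2 ≤ N) (k : Fin d) (x : Torus d N) : torusAdj x (x + ee d N k) := by
  unfold torusAdj
  have hv : ∀ i : Fin d,
      min ((x i - (x + ee d N k) i).val) (N - (x i - (x + ee d N k) i).val)
        = if i = k then 1 else 0 := by
    intro i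
    by_cases hik : i = k
    · subst hik
      have he : x i - (x + ee d N i) i = -1 := by simp [ee]
      rw [he, if_pos rfl]
      have hv1 : (-1 : ZMod N).val = N - 1 := by
        obtain ⟨m, rfl⟩ := Nat.exists_eq_succ_of_ne_zero (by omega : N ≠ 0)
        simpa using ZMod.val_neg_one m
      rw [hv1]; omega
    · have he : x i - (x + ee d N k) i = 0 := by simp [ee, hik]
      rw [he, if_neg hik, ZMod.val_zero]; simp
  rw [Finset.sum_congr rfl fun i _ => hv i]
  simp

lemma adj_sub (hN2 : 2 ≤ N) (k : Fin d) (x : Torus d N) : torusAdj x (x - ee d N k) := by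
  unfold torusAdj
  have hv : ∀ i : Fin d,
      min ((x i - (x - ee d N k) i).val) (N - (x i - (x - ee d N k) i).val)
        = if i = k then 1 else 0 := by
    intro i
    by_cases hik : i = k
    · subst hik
      have he : x i - (x - ee d N i) i = 1 := by simp [ee]
      rw [he, if_pos rfl]
      haveI : Fact (1 < N) := ⟨by omega⟩
      rw [ZMod.val_one N]; omega
    · have he : x i - (x - ee d N k) i = 0 := by simp [ee, hik]
      rw [he, if_neg hik, ZMod.val_zero]; simp
  rw [Finset.sum_congr rfl fun i _ => hv i]
  simp

lemma flow_L (hN2 : 2 ≤ N) : IsFlow torusAdj (LL d N h) := by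
  intro x x'
  constructor
  · intro _
    unfold LL
    rw [← Finset.sum_neg_distrib]
    apply Finset.sum_congr rfl
    intro k _
    exact (neg_sub _ _).symm
  · intro hadj
    unfold LL
    apply Finset.sum_eq_zero
    intro k _
    rw [if_neg, if_neg]
    · ring
    · intro he
      apply hadj
      have hx' : x' = x - ee d N k := by rw [he, add_sub_cancel_right]
      rw [hx']
      exact adj_sub d N hN2 k x
    · intro he
      apply hadj
      rw [he]
      exact adj_add d N hN2 k x

lemma div_L (hN2 : 2 ≤ N) (x : Torus d N) :
    torusDiv (LL d N h) x = gg d N h x := by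
  unfold torusDiv
  rw [tsum_fintype]
  have step : ∀ x' : Torus d N, (if torusAdj x x' then LL d N h x x' else 0)
      = ∑ k : Fin d,
          ((if x' = x + ee d N k then (if torusAdj x x' then FF d N h k x else 0) else 0)
            - (if x = x' + ee d N k then (if torusAdj x x' then FF d N h k x' else 0) else 0)) := by
    intro x'
    by_cases ha : torusAdj x x' <;> simp [ha, LL]
  rw [Finset.sum_congr rfl fun x' _ => step x', Finset.sum_comm]
  have hk : ∀ k : Fin d,
      (∑ x' : Torus d N,
        ((if x' = x + ee d N k then (if torusAdj x x' then FF d N h k x else 0) else 0)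
          - (if x = x' + ee d N k then (if torusAdj x x' then FF d N h k x' else 0) else 0)))
        = dd d N h (k : ℕ) x := by
    intro k
    rw [Finset.sum_sub_distrib]
    have h1 : (∑ x' : Torus d N,
        if x' = x + ee d N k then (if torusAdj x x' then FF d N h k x else 0) else 0)
          = FF d N h k x := by
      rw [Finset.sum_ite_eq' Finset.univ (x + ee d N k)
        (fun x' => if torusAdj x x' then FF d N h k x else 0)]
      simp [adj_add d N hN2 k x]
    have h2 : (∑ x' : Torus d N,
        if x = x' + ee d N k then (if torusAdj x x' then FF d N h k x' else 0) else 0)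
          = FF d N h k (x - ee d N k) := by
      have hc : ∀ x' : Torus d N, (x = x' + ee d N k) ↔ (x' = x - ee d N k) := by
        intro x'
        rw [eq_sub_iff_add_eq]
        exact eq_comm
      rw [Finset.sum_congr rfl fun x' _ => if_congr (hc x') rfl rfl]
      rw [Finset.sum_ite_eq' Finset.univ (x - ee d N k)
        (fun x' => if torusAdj x x' then FF d N h k x' else 0)]
      simp [adj_sub d N hN2 k x]
    rw [h1, h2, F_diff]
  rw [Finset.sum_congr rfl fun k _ => hk k]
  rw [Fin.sum_univ_eq_sum_range (fun m => dd d N h m x) d]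
  exact telescope d N h x

lemma H_bound (M : ℝ) (hM : ∀ y, |gg d N h y| ≤ M) :
    ∀ k, ∀ y : Torus d N, |HH d N h k y| ≤ M := by
  have hNpos : (0 : ℝ) < N := by
    have : N ≠ 0 := NeZero.ne N
    positivity
  intro k
  induction k with
  | zero =>
    intro y
    unfold HH
    rw [pow_zero, div_one, S_zero]
    exact hM y
  | succ k ih =>
    intro y
    by_cases hkd : k < d
    · set κ : Fin d := ⟨k, hkd⟩ with hκ
      have hrec : HH d N h (k + 1) y
          = (∑ t : ZMod N, HH d N h k (Function.update y κ t)) / N := by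
        unfold HH
        rw [← S_rec d N h κ y, pow_succ, ← div_div, Finset.sum_div]
      rw [hrec, abs_div, abs_of_nonneg (le_of_lt hNpos), div_le_iff₀ hNpos]
      calc |∑ t : ZMod N, HH d N h k (Function.update y κ t)|
          ≤ ∑ t : ZMod N, |HH d N h k (Function.update y κ t)| :=
            Finset.abs_sum_le_sum_abs _ _
        _ ≤ ∑ _t : ZMod N, M := Finset.sum_le_sum fun t _ => ih _
        _ = M * N := by
            rw [Finset.sum_const, Finset.card_univ, ZMod.card, nsmul_eq_mul]; ring
    · have hM0 : 0 ≤ M := le_trans (abs_nonneg _) (hM y)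
      unfold HH
      rw [S_top d N h y (k + 1) (by omega), zero_div, abs_zero]
      exact hM0

lemma F_bound (M : ℝ) (hM : ∀ y, |gg d N h y| ≤ M) (k : Fin d) (x : Torus d N) :
    |FF d N h k x| ≤ (N : ℝ) * (2 * M) := by
  have hd : ∀ (m : ℕ) (z : Torus d N), |dd d N h m z| ≤ 2 * M := by
    intro m z
    unfold dd
    calc |HH d N h m z - HH d N h (m + 1) z|
        ≤ |HH d N h m z| + |HH d N h (m + 1) z| := abs_sub _ _
      _ ≤ M + M := add_le_add (H_bound d N h M hM m z) (H_bound d N h M hM (m + 1) z)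
      _ = 2 * M := by ring
  have hM2 : 0 ≤ 2 * M := le_trans (abs_nonneg _) (hd 0 x)
  calc |FF d N h k x|
      ≤ ∑ m ∈ Finset.range ((x k).val + 1),
          |dd d N h (k : ℕ) (Function.update x k (m : ZMod N))| :=
        Finset.abs_sum_le_sum_abs _ _
    _ ≤ ∑ _m ∈ Finset.range ((x k).val + 1), 2 * M :=
        Finset.sum_le_sum fun m _ => hd _ _
    _ = ((x k).val + 1 : ℕ) * (2 * M) := by
        rw [Finset.sum_const, Finset.card_range, nsmul_eq_mul]
    _ ≤ (N : ℝ) * (2 * M) := by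
        apply mul_le_mul_of_nonneg_right _ hM2
        have h1 : (x k).val + 1 ≤ N := ZMod.val_lt (x k)
        exact_mod_cast h1

end Statement8Aux
/-- There is `c = c(d)` such that for every `N ≥ 1` and every `h` on the torus
there is a flow `L` with `div L + h ≡ ν(h)` and `|L|_∞ ≤ c N |h|_∞`. -/
theorem statement8 (d : ℕ) (hd : 1 ≤ d) :
    ∃ c : ℝ, 0 < c ∧ ∀ N : ℕ, 1 ≤ N → ∀ h : Torus d N → ℝ,
      ∃ L : Torus d N → Torus d N → ℝ, IsFlow torusAdj L ∧
        (∀ x, torusDiv L x + h x = nu d N h) ∧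
        torusFlowSup L ≤ c * (N : ℝ) * torusSupNorm h := by
  classical
  refine ⟨8 * d + 1, by positivity, ?_⟩
  intro N hN h
  haveI : NeZero N := ⟨by omega⟩
  have hxne : Nonempty (Torus d N) := ⟨fun _ => 0⟩
  obtain ⟨x₀⟩ := hxne
  have hbdd : BddAbove (Set.range fun x : Torus d N => |h x|) :=
    Set.Finite.bddAbove (Set.finite_range _)
  have hle : ∀ x, |h x| ≤ torusSupNorm h := fun x => le_ciSup hbdd x
  have hsup0 : 0 ≤ torusSupNorm h := le_trans (abs_nonneg _) (hle x₀)
  rcases Nat.lt_or_ge N 2 with hN1 | hN2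
  · -- Case N = 1: the torus is a single point and the zero flow works.
    have hN1' : N = 1 := by omega
    subst hN1'
    haveI : Unique (Torus d 1) := by infer_instance
    refine ⟨fun _ _ => 0, ?_, ?_, ?_⟩
    · intro x x'
      exact ⟨fun _ => by ring, fun _ => rfl⟩
    · intro x
      have hdiv : torusDiv (fun _ _ => (0 : ℝ)) x = 0 := by
        unfold torusDiv
        rw [tsum_fintype]
        apply Finset.sum_eq_zero
        intro y _
        split <;> rfl
      rw [hdiv, zero_add]
      unfold nu
      rw [tsum_fintype]
      have huniv : (Finset.univ : Finset (Torus d 1)) = {x} := by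
        apply Finset.eq_singleton_iff_unique_mem.mpr
        exact ⟨Finset.mem_univ x, fun y _ => Subsingleton.elim y x⟩
      rw [huniv, Finset.sum_singleton]
      simp
    · have hzero : torusFlowSup ((fun _ _ => (0 : ℝ)) : Torus d 1 → Torus d 1 → ℝ) = 0 := by
        unfold torusFlowSup
        simp
      rw [hzero]
      have : (0 : ℝ) ≤ (8 * d + 1 : ℝ) * 1 * torusSupNorm h := by positivity
      simpa using this
  · -- Main case N ≥ 2.
    set M : ℝ := 2 * torusSupNorm h with hM
    have hnu : |nu d N h| ≤ torusSupNorm h := by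
      unfold nu
      rw [tsum_fintype]
      have hNd : (0 : ℝ) < (N : ℝ) ^ d := by
        have : (0 : ℝ) < (N : ℝ) := by
          exact_mod_cast Nat.pos_of_ne_zero (NeZero.ne N)
        positivity
      rw [abs_div, abs_of_nonneg (le_of_lt hNd), div_le_iff₀ hNd]
      calc |∑ x : Torus d N, h x| ≤ ∑ x : Torus d N, |h x| :=
            Finset.abs_sum_le_sum_abs _ _
        _ ≤ ∑ _x : Torus d N, torusSupNorm h := Finset.sum_le_sum fun x _ => hle x
        _ = torusSupNorm h * (N : ℝ) ^ d := by
            rw [Finset.sum_const, Finset.card_univ, Statement8Aux.card_torus,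
              nsmul_eq_mul]
            push_cast
            ring
    have hg : ∀ y, |Statement8Aux.gg d N h y| ≤ M := by
      intro y
      unfold Statement8Aux.gg
      calc |nu d N h - h y| ≤ |nu d N h| + |h y| := abs_sub _ _
        _ ≤ torusSupNorm h + torusSupNorm h := add_le_add hnu (hle y)
        _ = M := by rw [hM]; ring
    refine ⟨Statement8Aux.LL d N h, Statement8Aux.flow_L d N h hN2, ?_, ?_⟩
    · intro x
      rw [Statement8Aux.div_L d N h hN2 x]
      unfold Statement8Aux.gg
      ring
    · apply ciSup_le
      intro p
      have hFb : ∀ (k : Fin d) (z : Torus d N),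
          |Statement8Aux.FF d N h k z| ≤ (N : ℝ) * (2 * M) :=
        fun k z => Statement8Aux.F_bound d N h M hg k z
      have hNM : 0 ≤ (N : ℝ) * (2 * M) := by
        have : (0 : ℝ) ≤ M := by rw [hM]; positivity
        positivity
    -- bound each summand of LL
      have hterm : ∀ k : Fin d,
          |(if p.2 = p.1 + Statement8Aux.ee d N k then Statement8Aux.FF d N h k p.1 else 0)
            - (if p.1 = p.2 + Statement8Aux.ee d N k then Statement8Aux.FF d N h k p.2 else 0)|
            ≤ 2 * ((N : ℝ) * (2 * M)) := by
        intro k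
        have h1 : |(if p.2 = p.1 + Statement8Aux.ee d N k
            then Statement8Aux.FF d N h k p.1 else 0)| ≤ (N : ℝ) * (2 * M) := by
          split
          · exact hFb k p.1
          · simpa using hNM
        have h2 : |(if p.1 = p.2 + Statement8Aux.ee d N k
            then Statement8Aux.FF d N h k p.2 else 0)| ≤ (N : ℝ) * (2 * M) := by
          split
          · exact hFb k p.2
          · simpa using hNM
        calc |_ - _| ≤ |_| + |_| := abs_sub _ _
          _ ≤ (N : ℝ) * (2 * M) + (N : ℝ) * (2 * M) := add_le_add h1 h2
          _ = 2 * ((N : ℝ) * (2 * M)) := by ring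
      calc |Statement8Aux.LL d N h p.1 p.2|
          ≤ ∑ k : Fin d,
              |(if p.2 = p.1 + Statement8Aux.ee d N k
                  then Statement8Aux.FF d N h k p.1 else 0)
                - (if p.1 = p.2 + Statement8Aux.ee d N k
                  then Statement8Aux.FF d N h k p.2 else 0)| :=
            Finset.abs_sum_le_sum_abs _ _
        _ ≤ ∑ _k : Fin d, 2 * ((N : ℝ) * (2 * M)) :=
            Finset.sum_le_sum fun k _ => hterm k
        _ = (d : ℝ) * (2 * ((N : ℝ) * (2 * M))) := by
            rw [Finset.sum_const, Finset.card_univ, Fintype.card_fin, nsmul_eq_mul]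
        _ ≤ (8 * d + 1 : ℝ) * (N : ℝ) * torusSupNorm h := by
            rw [hM]
            have hN0 : (0 : ℝ) ≤ (N : ℝ) := Nat.cast_nonneg N
            nlinarith [hsup0, hN0, mul_nonneg hN0 hsup0]
end
end

section
/- Let d ≥ 1. There is a constant c depending only on d such that for every N ≥ 2 and every function g : T_N → ℝ vanishing outside S (the image in T_N of the interior boundary of the box {0,…,N−1}^d), there exists a flow K on the edges of T_N with |K|_∞ ≤ c |g|_∞ and |div K(x) + g(x)| ≤ c |g|_∞ / N for every x ∈ T_N. -/
open Filter Topology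

noncomputable section

namespace S9

variable {d N : ℕ}

def Pb (i : Fin d) (z : Torus d N) : Prop := (z i).val = 0 ∨ (z i).val = N - 1

instance (i : Fin d) (z : Torus d N) : Decidable (Pb i z) := by unfold Pb; infer_instance

def srcCond (i : Fin d) (z : Torus d N) : Prop := Pb i z ∧ ∀ j, j < i → ¬ Pb j z

instance (i : Fin d) (z : Torus d N) : Decidable (srcCond i z) := by
  unfold srcCond; infer_instance

def lineCond (i : Fin d) (x z : Torus d N) : Prop :=
  (∀ j, j ≠ i → z j = x j) ∧ srcCond i z

instance (i : Fin d) (x z : Torus d N) : Decidable (lineCond i x z) := by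
  unfold lineCond; infer_instance

def ee (d N : ℕ) (i : Fin d) : Torus d N := Pi.single i 1

def ww (N : ℕ) (v : ZMod N) : ℝ := 1 - ((v.val : ℝ) + 1) / N

def ff [NeZero N] (g : Torus d N → ℝ) (i : Fin d) (x : Torus d N) : ℝ :=
  -∑ z : Torus d N, if lineCond i x z then g z * ww N (x i - z i) else 0

def KK [NeZero N] (g : Torus d N → ℝ) (x y : Torus d N) : ℝ :=
  ∑ i : Fin d, ((if y = x + ee d N i then ff g i x else 0)
    - (if x = y + ee d N i then ff g i y else 0))

lemma val_neg_one' (hN : 2 ≤ N) : (-1 : ZMod N).val = N - 1 := by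
  obtain ⟨m, rfl⟩ : ∃ m, N = m + 1 := ⟨N - 1, by omega⟩
  simp [ZMod.val_neg_one]

lemma adj_add [NeZero N] (hN : 2 ≤ N) (x : Torus d N) (i : Fin d) :
    torusAdj x (x + ee d N i) := by
  unfold torusAdj
  rw [Finset.sum_eq_single i]
  · have h1 : x i - (x + ee d N i) i = -1 := by
      simp [ee, Pi.single_eq_same]
    rw [h1, val_neg_one' hN]
    omega
  · intro j _ hj
    have : x j - (x + ee d N i) j = 0 := by
      simp [ee, Pi.single_eq_of_ne hj]
    rw [this, ZMod.val_zero]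
    simp
  · simp

lemma adj_add' [NeZero N] (hN : 2 ≤ N) (x : Torus d N) (i : Fin d) :
    torusAdj (x + ee d N i) x := by
  haveI : Fact (1 < N) := ⟨by omega⟩
  unfold torusAdj
  rw [Finset.sum_eq_single i]
  · have h1 : (x + ee d N i) i - x i = 1 := by
      simp [ee, Pi.single_eq_same]
    rw [h1, ZMod.val_one]
    omega
  · intro j _ hj
    have : (x + ee d N i) j - x j = 0 := by
      simp [ee, Pi.single_eq_of_ne hj]
    rw [this, ZMod.val_zero]
    simp
  · simp

lemma ee_inj [NeZero N] (hN : 2 ≤ N) {x : Torus d N} {i j : Fin d}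
    (h : x + ee d N i = x + ee d N j) : i = j := by
  haveI : Fact (1 < N) := ⟨by omega⟩
  by_contra hij
  have h2 := congrFun (add_left_cancel h) i
  rw [ee, ee, Pi.single_eq_same, Pi.single_eq_of_ne hij] at h2
  exact one_ne_zero h2

lemma KK_antisymm [NeZero N] (g : Torus d N → ℝ) (x y : Torus d N) :
    KK g x y = - KK g y x := by
  unfold KK
  rw [← Finset.sum_neg_distrib]
  apply Finset.sum_congr rfl
  intro i _
  ring

lemma KK_adj_zero [NeZero N] (hN : 2 ≤ N) (g : Torus d N → ℝ) {x y : Torus d N}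
    (h : ¬ torusAdj x y) : KK g x y = 0 := by
  unfold KK
  apply Finset.sum_eq_zero
  intro i _
  rw [if_neg, if_neg]
  · ring
  · intro hxy; exact h (hxy ▸ adj_add' hN y i)
  · intro hxy; exact h (hxy ▸ adj_add hN x i)

lemma div_KK [NeZero N] (hN : 2 ≤ N) (g : Torus d N → ℝ) (x : Torus d N) :
    torusDiv (KK g) x = ∑ i : Fin d, (ff g i x - ff g i (x - ee d N i)) := by
  unfold torusDiv
  rw [tsum_fintype]
  have h1 : ∀ x' : Torus d N, (if torusAdj x x' then KK g x x' else 0) = KK g x x' := by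
    intro x'
    split_ifs with h
    · rfl
    · exact (KK_adj_zero hN g h).symm
  simp only [h1]
  unfold KK
  rw [Finset.sum_comm]
  apply Finset.sum_congr rfl
  intro i _
  rw [Finset.sum_sub_distrib]
  congr 1
  · rw [Finset.sum_ite_eq' Finset.univ (x + ee d N i) (fun _ => ff g i x)]
    simp
  · have hiff : ∀ x' : Torus d N, (x = x' + ee d N i) ↔ (x' = x - ee d N i) := by
      intro x'
      constructor
      · intro h; rw [h]; abel
      · intro h; rw [h]; abel
    calc ∑ x' : Torus d N, (if x = x' + ee d N i then ff g i x' else 0)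
        = ∑ x' : Torus d N, (if x' = x - ee d N i then ff g i x' else 0) := by
          apply Finset.sum_congr rfl; intro x' _
          simp only [hiff x']
      _ = ff g i (x - ee d N i) := by
          rw [Finset.sum_ite_eq' Finset.univ (x - ee d N i) (fun x' => ff g i x')]
          simp

lemma ww_sub [NeZero N] (hN : 2 ≤ N) (v : ZMod N) :
    ww N v - ww N (v - 1) = (if v = 0 then 1 else 0) - 1 / N := by
  have hNR : (0:ℝ) < N := by
    have : 0 < N := by omega
    exact_mod_cast this
  by_cases hv : v = 0
  · subst hv
    rw [if_pos rfl]
    have h1 : ((0:ZMod N) - 1) = -1 := by ring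
    rw [h1]
    unfold ww
    rw [ZMod.val_zero, val_neg_one' hN]
    have : ((N - 1 : ℕ) : ℝ) = (N:ℝ) - 1 := by
      push_cast [Nat.cast_sub (by omega : 1 ≤ N)]
      ring
    rw [this]
    field_simp
    ring
  · rw [if_neg hv]
    have h1 : 1 ≤ v.val := ZMod.val_pos.mpr hv
    have h2 : (v - 1).val = v.val - 1 := by
      have hveq : v - 1 = ((v.val - 1 : ℕ) : ZMod N) := by
        rw [Nat.cast_sub h1, Nat.cast_one, ZMod.natCast_zmod_val]
      rw [hveq, ZMod.val_cast_of_lt]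
      have := ZMod.val_lt v
      omega
    unfold ww
    rw [h2]
    have : ((v.val - 1 : ℕ) : ℝ) = (v.val : ℝ) - 1 := by
      push_cast [Nat.cast_sub h1]
      ring
    rw [this]
    field_simp
    ring

lemma ff_diff [NeZero N] (hN : 2 ≤ N) (g : Torus d N → ℝ) (i : Fin d) (x : Torus d N) :
    ff g i x - ff g i (x - ee d N i)
      = -(if srcCond i x then g x else 0)
        + (1/N) * ∑ z : Torus d N, (if lineCond i x z then g z else 0) := by
  have hxj : ∀ j, j ≠ i → (x - ee d N i) j = x j := by
    intro j hj
    simp [ee, Pi.single_eq_of_ne hj]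
  have hcond : ∀ z, lineCond i (x - ee d N i) z ↔ lineCond i x z := by
    intro z
    unfold lineCond
    constructor
    · rintro ⟨h1, h2⟩
      exact ⟨fun j hj => (h1 j hj).trans (hxj j hj), h2⟩
    · rintro ⟨h1, h2⟩
      exact ⟨fun j hj => (h1 j hj).trans (hxj j hj).symm, h2⟩
  have hxi : (x - ee d N i) i = x i - 1 := by
    simp [ee, Pi.single_eq_same]
  have step1 : ff g i x - ff g i (x - ee d N i)
      = -∑ z : Torus d N,
          (if lineCond i x z then g z * ((if x i - z i = 0 then (1:ℝ) else 0) - 1/N) else 0) := by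
    unfold ff
    rw [neg_sub_neg, ← Finset.sum_sub_distrib, ← Finset.sum_neg_distrib]
    apply Finset.sum_congr rfl
    intro z _
    have harg : (x - ee d N i) i - z i = (x i - z i) - 1 := by rw [hxi]; ring
    by_cases h : lineCond i x z
    · rw [if_pos ((hcond z).mpr h), if_pos h, if_pos h, harg]
      have hw := ww_sub hN (x i - z i)
      linear_combination (-(g z)) * hw
    · rw [if_neg (fun hc => h ((hcond z).mp hc)), if_neg h, if_neg h]
      simp
  rw [step1]
  have step2 : ∀ z : Torus d N,
      (if lineCond i x z then g z * ((if x i - z i = 0 then (1:ℝ) else 0) - 1/N) else 0)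
      = (if lineCond i x z then g z * (if x i - z i = 0 then (1:ℝ) else 0) else 0)
        - (1/N) * (if lineCond i x z then g z else 0) := by
    intro z
    split_ifs <;> ring
  simp only [step2]
  rw [Finset.sum_sub_distrib, ← Finset.mul_sum]
  have step3 : (∑ z : Torus d N,
      (if lineCond i x z then g z * (if x i - z i = 0 then (1:ℝ) else 0) else 0))
      = (if srcCond i x then g x else 0) := by
    rw [Finset.sum_eq_single x]
    · by_cases h : srcCond i x
      · have hc : lineCond i x x := ⟨fun j _ => rfl, h⟩
        simp [hc, h]
      · have hc : ¬ lineCond i x x := fun hc => h hc.2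
        simp [hc, h]
    · intro z _ hz
      by_cases h : lineCond i x z
      · rw [if_pos h, if_neg, mul_zero]
        intro h0
        apply hz
        funext j
        by_cases hj : j = i
        · subst hj; exact (sub_eq_zero.mp h0).symm
        · exact h.1 j hj
      · simp [h]
    · simp
  rw [step3]
  ring

lemma mem_bdry_exists_Pb [NeZero N] (hN : 2 ≤ N) {x : Torus d N}
    (hx : x ∈ torusBdry d N) : ∃ i, Pb i x := by
  obtain ⟨z, hz, rfl⟩ := hx
  obtain ⟨i, hi⟩ := hz.2
  refine ⟨i, ?_⟩
  unfold Pb latProj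
  rcases hi with h0 | h1
  · left; rw [h0]; simp
  · right
    rw [h1]
    have : (((N:ℤ) - 1 : ℤ) : ZMod N) = ((N - 1 : ℕ) : ZMod N) := by
      push_cast [Nat.cast_sub (by omega : 1 ≤ N)]
      ring
    rw [this, ZMod.val_cast_of_lt (by omega)]

lemma srcCond_sum [NeZero N] (hN : 2 ≤ N) (g : Torus d N → ℝ)
    (hg : ∀ x ∉ torusBdry d N, g x = 0) (x : Torus d N) :
    ∑ i : Fin d, (if srcCond i x then g x else 0) = g x := by
  by_cases hgx : g x = 0
  · simp [hgx]
  · have hx : x ∈ torusBdry d N := by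
      by_contra h; exact hgx (hg x h)
    obtain ⟨i1, hi1⟩ := mem_bdry_exists_Pb hN hx
    set F := Finset.univ.filter (fun i => Pb i x) with hF
    have hFne : F.Nonempty := ⟨i1, by simp [hF, hi1]⟩
    set i0 := F.min' hFne with hi0def
    have hi0 : Pb i0 x := (Finset.mem_filter.mp (F.min'_mem hFne)).2
    rw [Finset.sum_eq_single i0]
    · rw [if_pos]
      refine ⟨hi0, fun j hj hPj => ?_⟩
      have : i0 ≤ j := F.min'_le j (by simp [hF, hPj])
      exact absurd this (not_le.mpr hj)
    · intro j _ hj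
      rw [if_neg]
      rintro ⟨hPj, hmin⟩
      rcases hj.lt_or_gt with h | h
      · have : i0 ≤ j := F.min'_le j (by simp [hF, hPj])
        exact absurd this (not_le.mpr h)
      · exact hmin i0 h hi0
    · simp

lemma ww_abs [NeZero N] (hN : 2 ≤ N) (v : ZMod N) : |ww N v| ≤ 1 := by
  have hNR : (0:ℝ) < N := by
    have : 0 < N := by omega
    exact_mod_cast this
  have h1 : v.val < N := ZMod.val_lt v
  have h2 : ((v.val : ℝ) + 1) ≤ N := by
    have : (v.val : ℝ) + 1 ≤ (v.val + 1 : ℕ) := by push_cast; ring_nf; rfl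
    calc ((v.val:ℝ) + 1) = ((v.val + 1 : ℕ) : ℝ) := by push_cast; ring
      _ ≤ N := by exact_mod_cast h1
  have h3 : (0:ℝ) ≤ (v.val : ℝ) + 1 := by positivity
  have h4 : ((v.val : ℝ) + 1) / N ≤ 1 := by
    rw [div_le_one hNR]; exact h2
  have h5 : (0:ℝ) ≤ ((v.val : ℝ) + 1) / N := by positivity
  rw [abs_le]
  unfold ww
  constructor <;> nlinarith


lemma line_bound [NeZero N] (hN : 2 ≤ N) (i : Fin d) (x : Torus d N) (t : Torus d N → ℝ)
    {M : ℝ} (ht : ∀ z, |t z| ≤ M) :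
    |∑ z : Torus d N, (if lineCond i x z then t z else 0)| ≤ 2 * M := by
  classical
  set z0 : Torus d N := Function.update x i 0 with hz0
  set z1 : Torus d N := Function.update x i ((N - 1 : ℕ) : ZMod N) with hz1
  have hM0 : 0 ≤ M := le_trans (abs_nonneg _) (ht z0)
  have hval1 : (((N - 1 : ℕ) : ZMod N)).val = N - 1 := ZMod.val_cast_of_lt (by omega)
  have hz01 : z0 ≠ z1 := by
    intro h
    have h2 := congrFun h i
    rw [hz0, hz1, Function.update_self, Function.update_self] at h2
    have h3 := congrArg ZMod.val h2
    rw [ZMod.val_zero, hval1] at h3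
    omega
  have hsub : (∑ z : Torus d N, (if lineCond i x z then t z else 0))
      = ∑ z ∈ ({z0, z1} : Finset (Torus d N)), (if lineCond i x z then t z else 0) := by
    apply (Finset.sum_subset (Finset.subset_univ _) ?_).symm
    intro z _ hz
    rw [if_neg]
    rintro ⟨hline, hPb, hmin⟩
    apply hz
    have hzeq : ∀ c : ZMod N, z i = c → z = Function.update x i c := by
      intro c hc
      funext j
      by_cases hj : j = i
      · subst hj; rw [Function.update_self, hc]
      · rw [Function.update_of_ne hj, hline j hj]
    rcases hPb with h0 | h1
    · have : z i = 0 := by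
        rw [← ZMod.natCast_zmod_val (z i), h0, Nat.cast_zero]
      simp only [Finset.mem_insert, Finset.mem_singleton]
      left; exact hzeq 0 this
    · have : z i = ((N - 1 : ℕ) : ZMod N) := by
        rw [← ZMod.natCast_zmod_val (z i), h1]
      simp only [Finset.mem_insert, Finset.mem_singleton]
      right; exact hzeq _ this
  rw [hsub, Finset.sum_pair hz01]
  have hb : ∀ z : Torus d N, |(if lineCond i x z then t z else 0)| ≤ M := by
    intro z
    split_ifs
    · exact ht z
    · simpa using hM0
  calc |(if lineCond i x z0 then t z0 else 0) + (if lineCond i x z1 then t z1 else 0)|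
      ≤ |(if lineCond i x z0 then t z0 else 0)| + |(if lineCond i x z1 then t z1 else 0)| :=
        abs_add_le _ _
    _ ≤ M + M := add_le_add (hb z0) (hb z1)
    _ = 2 * M := by ring

lemma ff_bound [NeZero N] (hN : 2 ≤ N) (g : Torus d N → ℝ) (i : Fin d) (x : Torus d N)
    {M : ℝ} (hM : ∀ z, |g z| ≤ M) : |ff g i x| ≤ 2 * M := by
  unfold ff
  rw [abs_neg]
  apply line_bound hN i x _ (fun z => ?_)
  calc |g z * ww N (x i - z i)| = |g z| * |ww N (x i - z i)| := abs_mul _ _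
    _ ≤ M * 1 := mul_le_mul (hM z) (ww_abs hN _) (abs_nonneg _)
        (le_trans (abs_nonneg _) (hM z))
    _ = M := mul_one M

lemma dir_sum_bound [NeZero N] (hN : 2 ≤ N) (g : Torus d N → ℝ) (x y : Torus d N)
    {M : ℝ} (hM : ∀ z, |g z| ≤ M) (hM0 : 0 ≤ M) :
    |∑ i : Fin d, (if y = x + ee d N i then ff g i x else 0)| ≤ 2 * M := by
  by_cases h : ∃ i, y = x + ee d N i
  · obtain ⟨i0, hi0⟩ := h
    have : (∑ i : Fin d, (if y = x + ee d N i then ff g i x else 0)) = ff g i0 x := by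
      rw [Finset.sum_eq_single i0]
      · rw [if_pos hi0]
      · intro j _ hj
        rw [if_neg]
        intro hj2
        exact hj (ee_inj hN (hj2.symm.trans hi0))
      · simp
    rw [this]
    exact ff_bound hN g i0 x hM
  · have : (∑ i : Fin d, (if y = x + ee d N i then ff g i x else 0)) = 0 := by
      apply Finset.sum_eq_zero
      intro i _
      rw [if_neg (fun hc => h ⟨i, hc⟩)]
    rw [this]
    simpa using by linarith

end S9

/-- There is `c = c(d)` such that for every `N ≥ 2` and every `g` on the torus
vanishing outside `S`, there is a flow `K` with `|K|_∞ ≤ c |g|_∞` and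
`|div K(x) + g(x)| ≤ c |g|_∞ / N` for every `x`. -/
theorem statement9 (d : ℕ) (hd : 1 ≤ d) :
    ∃ c : ℝ, 0 < c ∧ ∀ N : ℕ, 2 ≤ N → ∀ g : Torus d N → ℝ,
      (∀ x ∉ torusBdry d N, g x = 0) →
      ∃ K : Torus d N → Torus d N → ℝ, IsFlow torusAdj K ∧
        torusFlowSup K ≤ c * torusSupNorm g ∧
        (∀ x, |torusDiv K x + g x| ≤ c * torusSupNorm g / (N : ℝ)) := by
  have hd1 : (1:ℝ) ≤ d := by exact_mod_cast hd
  refine ⟨4 * d, by linarith, ?_⟩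
  intro N hN g hg
  haveI : NeZero N := ⟨by omega⟩
  have hNR : (0:ℝ) < N := by
    have : 0 < N := by omega
    exact_mod_cast this
  set M := torusSupNorm g with hMdef
  have hMb : ∀ z, |g z| ≤ M := by
    intro z
    show |g z| ≤ ⨆ x, |g x|
    exact le_ciSup (f := fun x => |g x|) (Set.Finite.bddAbove (Set.finite_range _)) z
  have hM0 : 0 ≤ M := le_trans (abs_nonneg _) (hMb (fun _ => 0))
  refine ⟨S9.KK g, ?_, ?_, ?_⟩
  · intro x x'
    exact ⟨fun _ => S9.KK_antisymm g x x', fun h => S9.KK_adj_zero hN g h⟩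
  · unfold torusFlowSup
    apply ciSup_le
    rintro ⟨x, y⟩
    have hB : |∑ i : Fin d, (if x = y + S9.ee d N i then S9.ff g i y else 0)| ≤ 2 * M :=
      S9.dir_sum_bound hN g y x hMb hM0
    have hA : |∑ i : Fin d, (if y = x + S9.ee d N i then S9.ff g i x else 0)| ≤ 2 * M :=
      S9.dir_sum_bound hN g x y hMb hM0
    have hK : S9.KK g x y
        = (∑ i : Fin d, (if y = x + S9.ee d N i then S9.ff g i x else 0))
          - (∑ i : Fin d, (if x = y + S9.ee d N i then S9.ff g i y else 0)) := by
      unfold S9.KK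
      rw [Finset.sum_sub_distrib]
    calc |S9.KK g x y| ≤ 2 * M + 2 * M := by
          rw [hK, sub_eq_add_neg]
          refine le_trans (abs_add_le _ _) ?_
          rw [abs_neg]
          exact add_le_add hA hB
      _ ≤ 4 * d * M := by nlinarith
  · intro x
    rw [S9.div_KK hN g x]
    have key : (∑ i : Fin d, (S9.ff g i x - S9.ff g i (x - S9.ee d N i))) + g x
        = (1/N) * ∑ i : Fin d, ∑ z : Torus d N, (if S9.lineCond i x z then g z else 0) := by
      have : ∀ i : Fin d, S9.ff g i x - S9.ff g i (x - S9.ee d N i)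
          = -(if S9.srcCond i x then g x else 0)
            + (1/N) * ∑ z : Torus d N, (if S9.lineCond i x z then g z else 0) :=
        fun i => S9.ff_diff hN g i x
      simp only [this]
      rw [Finset.sum_add_distrib, ← Finset.mul_sum, Finset.sum_neg_distrib,
        S9.srcCond_sum hN g hg x]
      ring
    rw [key]
    have hsum : |∑ i : Fin d, ∑ z : Torus d N, (if S9.lineCond i x z then g z else 0)|
        ≤ (d : ℝ) * (2 * M) := by
      refine le_trans (Finset.abs_sum_le_sum_abs _ _) ?_
      calc (∑ i : Fin d, |∑ z : Torus d N, (if S9.lineCond i x z then g z else 0)|)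
          ≤ ∑ _i : Fin d, 2 * M :=
            Finset.sum_le_sum (fun i _ => S9.line_bound hN i x g hMb)
        _ = (d : ℝ) * (2 * M) := by simp [mul_comm]
    rw [abs_mul]
    have h1N : |(1:ℝ)/N| = 1/N := abs_of_pos (by positivity)
    rw [h1N]
    calc (1/(N:ℝ)) * |∑ i : Fin d, ∑ z : Torus d N, (if S9.lineCond i x z then g z else 0)|
        ≤ (1/(N:ℝ)) * ((d:ℝ) * (2 * M)) := by
          apply mul_le_mul_of_nonneg_left hsum (by positivity)
      _ = 2 * d * M / N := by ring
      _ ≤ 4 * d * M / N := by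
          gcongr
          nlinarith
end
end
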